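/- arXiv:2511.13579 — 4 statements merged into one kernel-verified Lean document; each statement's English description precedes it below -/
import Mathlib

section
/- Let (b_λ)_{λ≥1} be nondecreasing with b_λ ≥ 1 and (a_λ) strictly increasing naturals with a_λ ≥ 2 and a_{λ+1} ≥ e^{b_λ} a_λ + 1. Define q_k = b_λ^k for a_λ ≤ k < a_{λ+1} (and q_k = 1 for k < a_1) and Q_k = k! · q_k. Then Σ_{k=1}^∞ 1/(Q_k)^{1/k} = ∞. -/
/-- Harmonic sum lower bound: `log n - log m ≤ ∑_{k=m}^{n-1} 1/k`. -/
lemma stmt8_harm (m n : ℕ) (hm : 1 ≤ m) (h : m ≤ n) :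
    Real.log n - Real.log m ≤ ∑ k ∈ Finset.Ico m n, (1 : ℝ) / k := by
  have htel : ∑ k ∈ Finset.Ico m n,
      (Real.log (k + 1) - Real.log k) = Real.log n - Real.log m := by
    rw [Finset.sum_Ico_eq_sub _ h]
    simp only [← Nat.cast_succ]
    rw [Finset.sum_range_sub (fun k : ℕ => Real.log k),
      Finset.sum_range_sub (fun k : ℕ => Real.log k)]
    simp
  rw [← htel]
  apply Finset.sum_le_sum
  intro k hk
  have hk1 : 1 ≤ k := le_trans hm (Finset.mem_Ico.mp hk).1
  have hk0 : (0 : ℝ) < k := by exact_mod_cast hk1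
  have hne : (k : ℝ) ≠ 0 := ne_of_gt hk0
  have h1 : Real.log (k + 1) - Real.log k = Real.log ((k + 1) / k) := by
    rw [Real.log_div (by positivity) hne]
  rw [h1]
  have h2 : Real.log ((k + 1 : ℝ) / k) ≤ (k + 1) / k - 1 :=
    Real.log_le_sub_one_of_pos (by positivity)
  have h3 : ((k : ℝ) + 1) / k - 1 = 1 / k := by field_simp; ring
  linarith

/-- Quasianalyticity of the constructed weight sequence `Q k = k! · q k`:
the series `Σ 1/(Q k)^{1/k}` diverges. -/
theorem stmt8 (b : ℕ → ℝ) (a : ℕ → ℕ) (q : ℕ → ℝ)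
    (hb1 : ∀ lam : ℕ, 1 ≤ lam → 1 ≤ b lam)
    (hbmono : ∀ l1 l2 : ℕ, 1 ≤ l1 → l1 ≤ l2 → b l1 ≤ b l2)
    (ha2 : ∀ lam : ℕ, 1 ≤ lam → 2 ≤ a lam)
    (hamono : ∀ lam : ℕ, 1 ≤ lam → a lam < a (lam + 1))
    (hgrow : ∀ lam : ℕ, 1 ≤ lam → Real.exp (b lam) * (a lam : ℝ) + 1 ≤ (a (lam + 1) : ℝ))
    (hq0 : ∀ k : ℕ, k < a 1 → q k = 1)
    (hq : ∀ lam : ℕ, 1 ≤ lam → ∀ k : ℕ, a lam ≤ k → k < a (lam + 1) → q k = (b lam) ^ k) :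
    ¬ Summable (fun k : ℕ => 1 / ((k.factorial : ℝ) * q k) ^ ((1 : ℝ) / (k : ℝ))) := by
  intro hsum
  set f : ℕ → ℝ := fun k : ℕ => 1 / ((k.factorial : ℝ) * q k) ^ ((1 : ℝ) / (k : ℝ)) with hf
  -- monotonicity of a
  have haLE : ∀ l1 l2 : ℕ, 1 ≤ l1 → l1 ≤ l2 → a l1 ≤ a l2 := by
    intro l1 l2 h1 h12
    induction l2 with
    | zero => omega
    | succ n ih =>
      rcases Nat.lt_or_ge l1 (n + 1) with h | h
      · have hn1 : 1 ≤ n := by omega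
        exact le_trans (ih (by omega)) (le_of_lt (hamono n hn1))
      · have heq : l1 = n + 1 := by omega
        subst heq; exact le_rfl
  -- every k ≥ a 1 lies in some block
  have hblockmem : ∀ k : ℕ, a 1 ≤ k → ∃ lam : ℕ, 1 ≤ lam ∧ a lam ≤ k ∧ k < a (lam + 1) := by
    intro k
    induction k with
    | zero => intro h; have := ha2 1 le_rfl; omega
    | succ n ih =>
      intro h
      rcases Nat.lt_or_ge n (a 1) with h1 | h1
      · refine ⟨1, le_rfl, by omega, ?_⟩
        have := hamono 1 le_rfl; omega
      · obtain ⟨lam, hl1, hl2, hl3⟩ := ih h1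
        rcases Nat.lt_or_ge (n + 1) (a (lam + 1)) with h2 | h2
        · exact ⟨lam, hl1, by omega, h2⟩
        · refine ⟨lam + 1, by omega, by omega, ?_⟩
          have := hamono (lam + 1) (by omega); omega
  -- q is positive
  have hqpos : ∀ k : ℕ, 0 < q k := by
    intro k
    rcases Nat.lt_or_ge k (a 1) with h | h
    · rw [hq0 k h]; norm_num
    · obtain ⟨lam, hl1, hl2, hl3⟩ := hblockmem k h
      rw [hq lam hl1 k hl2 hl3]
      have := hb1 lam hl1
      positivity
  -- f is nonnegative
  have hfnn : ∀ k : ℕ, 0 ≤ f k := by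
    intro k
    have : (0 : ℝ) ≤ (k.factorial : ℝ) * q k := by
      have := hqpos k
      positivity
    positivity
  -- per-term lower bound inside a block
  have hterm : ∀ lam : ℕ, 1 ≤ lam → ∀ k : ℕ, a lam ≤ k → k < a (lam + 1) →
      1 / ((k : ℝ) * b lam) ≤ f k := by
    intro lam hl k hk1 hk2
    have hk2' : 2 ≤ k := le_trans (ha2 lam hl) hk1
    have hkpos : (0 : ℝ) < k := by exact_mod_cast (by omega : 0 < k)
    have hkne : (k : ℝ) ≠ 0 := ne_of_gt hkpos
    have hbpos : (0 : ℝ) < b lam := lt_of_lt_of_le one_pos (hb1 lam hl)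
    have hqk : q k = (b lam) ^ k := hq lam hl k hk1 hk2
    have hfac : (0 : ℝ) < (k.factorial : ℝ) := by exact_mod_cast k.factorial_pos
    -- rewrite the rpow
    have hsplit : ((k.factorial : ℝ) * q k) ^ ((1 : ℝ) / (k : ℝ))
        = (k.factorial : ℝ) ^ ((1 : ℝ) / (k : ℝ)) * b lam := by
      rw [hqk, Real.mul_rpow (le_of_lt hfac) (by positivity)]
      congr 1
      rw [← Real.rpow_natCast (b lam) k, ← Real.rpow_mul (le_of_lt hbpos)]
      rw [mul_one_div, div_self hkne, Real.rpow_one]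
    have hfaclt : (k.factorial : ℝ) ^ ((1 : ℝ) / (k : ℝ)) ≤ (k : ℝ) := by
      have h1 : (k.factorial : ℝ) ≤ (k : ℝ) ^ k := by
        exact_mod_cast k.factorial_le_pow
      calc (k.factorial : ℝ) ^ ((1 : ℝ) / (k : ℝ))
          ≤ ((k : ℝ) ^ k) ^ ((1 : ℝ) / (k : ℝ)) :=
            Real.rpow_le_rpow (le_of_lt hfac) h1 (by positivity)
        _ = (k : ℝ) := by
            rw [← Real.rpow_natCast (k : ℝ) k, ← Real.rpow_mul (le_of_lt hkpos),
              mul_one_div, div_self hkne, Real.rpow_one]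
    have hpos2 : (0 : ℝ) < (k.factorial : ℝ) ^ ((1 : ℝ) / (k : ℝ)) * b lam := by
      positivity
    rw [hf]
    simp only
    rw [hsplit]
    apply one_div_le_one_div_of_le hpos2
    exact mul_le_mul_of_nonneg_right hfaclt (le_of_lt hbpos)
  -- block lower bound
  have hblock : ∀ lam : ℕ, 1 ≤ lam →
      (1 : ℝ) ≤ ∑ k ∈ Finset.Ico (a lam) (a (lam + 1)), f k := by
    intro lam hl
    have hbpos : (0 : ℝ) < b lam := lt_of_lt_of_le one_pos (hb1 lam hl)
    have hapos : (0 : ℝ) < (a lam : ℝ) := by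
      have := ha2 lam hl; exact_mod_cast (by omega : 0 < a lam)
    have hgr : Real.exp (b lam) * (a lam : ℝ) ≤ (a (lam + 1) : ℝ) := by
      have := hgrow lam hl; linarith
    -- log bound
    have hlog : b lam ≤ Real.log (a (lam + 1)) - Real.log (a lam) := by
      have h1 : Real.log (Real.exp (b lam) * (a lam : ℝ)) ≤ Real.log (a (lam + 1)) :=
        Real.log_le_log (by positivity) hgr
      rw [Real.log_mul (by positivity) (ne_of_gt hapos), Real.log_exp] at h1
      linarith
    have hharm : Real.log (a (lam + 1)) - Real.log (a lam)
        ≤ ∑ k ∈ Finset.Ico (a lam) (a (lam + 1)), (1 : ℝ) / k :=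
      stmt8_harm _ _ (by have := ha2 lam hl; omega) (le_of_lt (hamono lam hl))
    have hsum1 : ∑ k ∈ Finset.Ico (a lam) (a (lam + 1)), (1 : ℝ) / ((k : ℝ) * b lam)
        = (∑ k ∈ Finset.Ico (a lam) (a (lam + 1)), (1 : ℝ) / k) / b lam := by
      rw [Finset.sum_div]
      apply Finset.sum_congr rfl
      intro k _
      rw [div_div]
    have hstep : ∑ k ∈ Finset.Ico (a lam) (a (lam + 1)), (1 : ℝ) / ((k : ℝ) * b lam)
        ≤ ∑ k ∈ Finset.Ico (a lam) (a (lam + 1)), f k := by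
      apply Finset.sum_le_sum
      intro k hk
      obtain ⟨hk1, hk2⟩ := Finset.mem_Ico.mp hk
      exact hterm lam hl k hk1 hk2
    have : (1 : ℝ) ≤ ∑ k ∈ Finset.Ico (a lam) (a (lam + 1)), (1 : ℝ) / ((k : ℝ) * b lam) := by
      rw [hsum1, le_div_iff₀ hbpos, one_mul]
      linarith
    linarith
  -- partial sums grow without bound
  have hpartial : ∀ N : ℕ, (N : ℝ) ≤ ∑ k ∈ Finset.Ico (a 1) (a (N + 1)), f k := by
    intro N
    induction N with
    | zero => simp
    | succ n ih =>
      have hle1 : a 1 ≤ a (n + 1) := haLE 1 (n + 1) le_rfl (by omega)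
      have hle2 : a (n + 1) ≤ a (n + 2) := le_of_lt (hamono (n + 1) (by omega))
      rw [← Finset.sum_Ico_consecutive (fun k => f k) hle1 hle2]
      have := hblock (n + 1) (by omega)
      push_cast
      linarith
  -- contradiction with summability
  have hbound : ∀ N : ℕ, (N : ℝ) ≤ ∑' k, f k := by
    intro N
    refine le_trans (hpartial N) ?_
    exact Summable.sum_le_tsum _ (fun k _ => hfnn k) hsum
  obtain ⟨N, hN⟩ := exists_nat_gt (∑' k, f k)
  exact absurd (hbound N) (not_le.mpr hN)
end

section
/- Let M^{(λ)} (λ ∈ ℕ) be a family of positive sequences with sup_k (M_k^{(λ)})^{1/k} = ∞ for each λ, and M_k^{(λ₁)} ≤ M_k^{(λ₂)} for λ₁ ≤ λ₂ and all k. Define iteratively a_λ so that b_λ := (M_{a_λ}^{(λ)})^{2/a_λ} is nondecreasing and ≥ λ², and set Q_k = k! b_λ^k for a_λ ≤ k < a_{λ+1}. Then for every λ ∈ ℕ one has sup_{k} (Q_k / M_k^{(λ)})^{1/k} = ∞. More precisely, for every ν ≥ λ, (Q_{a_ν}/M_{a_ν}^{(λ)})^{1/a_ν} ≥ ν. -/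
/-- The constructed sequence `Q` is transversal to each member of the family `M`:
`(Q (a ν) / M λ (a ν))^{1/a ν} ≥ ν` for `ν ≥ λ`, so `sup_k (Q k / M λ k)^{1/k} = ∞`. -/
theorem stmt9 (M : ℕ → ℕ → ℝ) (a : ℕ → ℕ) (b : ℕ → ℝ) (Q : ℕ → ℝ)
    (hMpos : ∀ lam k : ℕ, 0 < M lam k)
    (hMsup : ∀ lam : ℕ, ¬ BddAbove (Set.range fun k : ℕ => (M lam k) ^ ((1 : ℝ) / (k : ℝ))))
    (hMmono : ∀ l1 l2 k : ℕ, l1 ≤ l2 → M l1 k ≤ M l2 k)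
    (ha1 : ∀ lam : ℕ, 1 ≤ lam → 1 ≤ a lam)
    (hamono : ∀ lam : ℕ, 1 ≤ lam → a lam < a (lam + 1))
    (hb : ∀ lam : ℕ, 1 ≤ lam → b lam = (M lam (a lam)) ^ ((2 : ℝ) / (a lam : ℝ)))
    (hbmono : ∀ l1 l2 : ℕ, 1 ≤ l1 → l1 ≤ l2 → b l1 ≤ b l2)
    (hbsq : ∀ lam : ℕ, 1 ≤ lam → (lam : ℝ) ^ 2 ≤ b lam)
    (hQ : ∀ lam : ℕ, 1 ≤ lam → ∀ k : ℕ, a lam ≤ k → k < a (lam + 1) →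
      Q k = (k.factorial : ℝ) * (b lam) ^ k) :
    (∀ lam nu : ℕ, 1 ≤ lam → lam ≤ nu →
      (nu : ℝ) ≤ (Q (a nu) / M lam (a nu)) ^ ((1 : ℝ) / (a nu : ℝ))) ∧
    (∀ lam : ℕ, 1 ≤ lam →
      ¬ BddAbove (Set.range fun k : ℕ => (Q k / M lam k) ^ ((1 : ℝ) / (k : ℝ)))) := by
  have key : ∀ lam nu : ℕ, 1 ≤ lam → lam ≤ nu →
      (nu : ℝ) ≤ (Q (a nu) / M lam (a nu)) ^ ((1 : ℝ) / (a nu : ℝ)) := by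
    intro lam nu hlam hln
    have hnu : 1 ≤ nu := hlam.trans hln
    set n := a nu with hn
    have hn1 : 1 ≤ n := ha1 nu hnu
    have hnpos : (0 : ℝ) < (n : ℝ) := by exact_mod_cast hn1
    set x := M nu n with hx
    have hxpos : (0 : ℝ) < x := hMpos nu n
    have hbnu : b nu = x ^ ((2 : ℝ) / (n : ℝ)) := hb nu hnu
    -- b nu ^ n = x ^ 2
    have hbn : (b nu) ^ n = x ^ 2 := by
      rw [hbnu, ← Real.rpow_natCast (x ^ ((2 : ℝ) / (n : ℝ))) n,
        ← Real.rpow_mul hxpos.le, ← Real.rpow_natCast x 2]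
      congr 1
      field_simp
      norm_num
    have hQn : Q n = (n.factorial : ℝ) * (b nu) ^ n :=
      hQ nu hnu n le_rfl (hamono nu hnu)
    have hfact : (1 : ℝ) ≤ (n.factorial : ℝ) := by exact_mod_cast n.factorial_pos
    have hbpos : (0 : ℝ) < (b nu) ^ n := by
      rw [hbn]; positivity
    have hQge : x ^ 2 ≤ Q n := by
      rw [hQn, ← hbn]
      exact le_mul_of_one_le_left hbpos.le hfact
    -- Q n / M lam n ≥ x
    have hMle : M lam n ≤ x := hMmono lam nu n hln
    have hMlampos : (0 : ℝ) < M lam n := hMpos lam n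
    have hdiv : x ≤ Q n / M lam n := by
      rw [le_div_iff₀ hMlampos]
      nlinarith [hQge, hMle, hxpos, hMlampos]
    -- (Q n / M lam n)^(1/n) ≥ x^(1/n) = b nu ^ (1/2) ≥ nu
    have hrpow : x ^ ((1:ℝ)/(n:ℝ)) ≤ (Q n / M lam n) ^ ((1:ℝ)/(n:ℝ)) :=
      Real.rpow_le_rpow hxpos.le hdiv (by positivity)
    have hxr : x ^ ((1:ℝ)/(n:ℝ)) = (b nu) ^ ((1:ℝ)/(2:ℝ)) := by
      rw [hbnu, ← Real.rpow_mul hxpos.le]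
      congr 1
      field_simp
    have hnule : (nu : ℝ) ≤ (b nu) ^ ((1:ℝ)/(2:ℝ)) := by
      have h2 : ((nu : ℝ) ^ 2) ^ ((1:ℝ)/(2:ℝ)) ≤ (b nu) ^ ((1:ℝ)/(2:ℝ)) :=
        Real.rpow_le_rpow (by positivity) (hbsq nu hnu) (by norm_num)
      have h3 : ((nu : ℝ) ^ 2) ^ ((1:ℝ)/(2:ℝ)) = (nu : ℝ) := by
        rw [← Real.rpow_natCast (nu:ℝ) 2, ← Real.rpow_mul (by positivity)]
        norm_num
      linarith
    calc (nu : ℝ) ≤ (b nu) ^ ((1:ℝ)/(2:ℝ)) := hnule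
      _ = x ^ ((1:ℝ)/(n:ℝ)) := hxr.symm
      _ ≤ _ := hrpow
  refine ⟨key, ?_⟩
  intro lam hlam hbdd
  obtain ⟨c, hc⟩ := hbdd
  set nu := max lam (⌈c⌉₊ + 1) with hnu
  have hln : lam ≤ nu := le_max_left _ _
  have h1 : (nu : ℝ) ≤ (Q (a nu) / M lam (a nu)) ^ ((1 : ℝ) / (a nu : ℝ)) :=
    key lam nu hlam hln
  have h2 : (Q (a nu) / M lam (a nu)) ^ ((1 : ℝ) / ((a nu : ℕ) : ℝ)) ≤ c :=
    hc ⟨a nu, rfl⟩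
  have h3 : c < (nu : ℝ) := by
    have : (⌈c⌉₊ + 1 : ℕ) ≤ nu := le_max_right _ _
    have hcc : c ≤ (⌈c⌉₊ : ℝ) := Nat.le_ceil c
    have : ((⌈c⌉₊ + 1 : ℕ) : ℝ) ≤ (nu : ℝ) := by exact_mod_cast this
    push_cast at this
    linarith
  linarith
end

section
/- Let F ⊆ ℝⁿ \ {0} be a nonempty open convex cone, and define Γ = {(x', y') ∈ ℝⁿ × ℝⁿ : (x' − y')·ξ > 0 for all ξ ∈ F}. Then the polar (dual) cone Γ° = {v ∈ ℝ^{2n} : y·v ≥ 0 for all y ∈ Γ} equals the closure of {(ξ, −ξ) : ξ ∈ F}. -/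
open Set

/-- For a nonempty open convex cone `F ⊆ ℝⁿ \ {0}`, the dual cone of
`Γ = {(x',y') : (x'−y')·ξ > 0 ∀ ξ ∈ F}` is the closure of `{(ξ,−ξ) : ξ ∈ F}`. -/
theorem stmt14 (n : ℕ) (F : Set (EuclideanSpace ℝ (Fin n)))
    (hopen : IsOpen F) (hconv : Convex ℝ F) (hne : F.Nonempty)
    (hcone : ∀ c : ℝ, 0 < c → ∀ x ∈ F, c • x ∈ F)
    (h0 : (0 : EuclideanSpace ℝ (Fin n)) ∉ F) :
    {v : EuclideanSpace ℝ (Fin n) × EuclideanSpace ℝ (Fin n) |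
        ∀ y ∈ {p : EuclideanSpace ℝ (Fin n) × EuclideanSpace ℝ (Fin n) |
            ∀ ξ ∈ F, (0 : ℝ) < inner ℝ (p.1 - p.2) ξ},
          (0 : ℝ) ≤ inner ℝ y.1 v.1 + inner ℝ y.2 v.2} =
      closure {p : EuclideanSpace ℝ (Fin n) × EuclideanSpace ℝ (Fin n) |
        ∃ ξ ∈ F, p = (ξ, -ξ)} := by
  classical
  -- the linear map ξ ↦ (ξ, -ξ)
  set L : EuclideanSpace ℝ (Fin n) →ₗ[ℝ] EuclideanSpace ℝ (Fin n) × EuclideanSpace ℝ (Fin n) :=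
    LinearMap.prod LinearMap.id (-LinearMap.id) with hL
  have hLapp : ∀ ξ : EuclideanSpace ℝ (Fin n), L ξ = (ξ, -ξ) := fun ξ => rfl
  have hLinj : LinearMap.ker L = ⊥ := by
    rw [LinearMap.ker_eq_bot]
    intro a b hab
    exact congrArg Prod.fst hab
  have hLce := LinearMap.isClosedEmbedding_of_injective hLinj
  -- RHS = L '' closure F
  have hRHSset : {p : EuclideanSpace ℝ (Fin n) × EuclideanSpace ℝ (Fin n) |
      ∃ ξ ∈ F, p = (ξ, -ξ)} = L '' F := by
    ext p; constructor
    · rintro ⟨ξ, hξ, rfl⟩; exact ⟨ξ, hξ, rfl⟩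
    · rintro ⟨ξ, hξ, rfl⟩; exact ⟨ξ, hξ, rfl⟩
  have hRHS : closure {p : EuclideanSpace ℝ (Fin n) × EuclideanSpace ℝ (Fin n) |
      ∃ ξ ∈ F, p = (ξ, -ξ)} = L '' closure F := by
    rw [hRHSset, hLce.closure_image_eq]
  -- obtain w₀ with ⟪w₀, ξ⟫ > 0 for all ξ ∈ F
  obtain ⟨f, hf⟩ := geometric_hahn_banach_open_point hconv hopen h0
  set w₀ : EuclideanSpace ℝ (Fin n) :=
    -(InnerProductSpace.toDual ℝ (EuclideanSpace ℝ (Fin n))).symm f with hw₀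
  have hw₀pos : ∀ ξ ∈ F, (0:ℝ) < inner ℝ w₀ ξ := by
    intro ξ hξ
    have h1 : (inner ℝ ((InnerProductSpace.toDual ℝ (EuclideanSpace ℝ (Fin n))).symm f) ξ : ℝ)
        = f ξ := InnerProductSpace.toDual_symm_apply
    have h2 : f ξ < 0 := by simpa using hf ξ hξ
    rw [hw₀, inner_neg_left, h1]
    linarith
  -- F is closed under addition
  have hFadd : ∀ a ∈ F, ∀ b ∈ F, a + b ∈ F := by
    intro a ha b hb
    have h1 : (1/2 : ℝ) • a + (1/2 : ℝ) • b ∈ F :=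
      hconv ha hb (by norm_num) (by norm_num) (by norm_num)
    have h2 := hcone 2 (by norm_num) _ h1
    have h3 : (2:ℝ) • ((1/2 : ℝ) • a + (1/2 : ℝ) • b) = a + b := by
      rw [smul_add, smul_smul, smul_smul]; norm_num
    rwa [h3] at h2
  -- closure F as a convex cone
  set K : ConvexCone ℝ (EuclideanSpace ℝ (Fin n)) :=
    { carrier := closure F
      smul_mem' := fun c hc x hx =>
        map_mem_closure (continuous_const_smul c) hx (fun y hy => hcone c hc y hy)
      add_mem' := fun x hx y hy =>
        map_mem_closure₂ continuous_add hx hy hFadd } with hK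
  have hKcoe : (K : Set (EuclideanSpace ℝ (Fin n))) = closure F := rfl
  have hKne : (K : Set (EuclideanSpace ℝ (Fin n))).Nonempty := hne.mono subset_closure
  have hKcl : IsClosed (K : Set (EuclideanSpace ℝ (Fin n))) := isClosed_closure
  have hdd : ∀ v, v ∈ ProperCone.innerDual (ProperCone.innerDual
      (K : Set (EuclideanSpace ℝ (Fin n))) : Set (EuclideanSpace ℝ (Fin n))) → v ∈ closure F := by
    have h0K : (0 : EuclideanSpace ℝ (Fin n)) ∈ closure F := by
      obtain ⟨x, hx⟩ := hne
      have ht : Filter.Tendsto (fun c : ℝ => c • x) (nhdsWithin 0 (Set.Ioi 0)) (nhds 0) := by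
        have this : Filter.Tendsto (fun c : ℝ => c • x) (nhds 0) (nhds ((0:ℝ) • x)) :=
          (continuous_id.smul continuous_const).tendsto (0:ℝ)
        rw [zero_smul] at this
        exact this.mono_left nhdsWithin_le_nhds
      exact mem_closure_of_tendsto ht
        (Filter.eventually_of_mem self_mem_nhdsWithin (fun c hc => hcone c hc x hx))
    let C : ProperCone ℝ (EuclideanSpace ℝ (Fin n)) :=
      { carrier := closure F
        add_mem' := fun hx hy => K.add_mem hx hy
        zero_mem' := h0K
        smul_mem' := fun c x hx => by
          rcases eq_or_lt_of_le c.2 with h | h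
          · have hc : c = 0 := NNReal.eq h.symm
            rw [hc, zero_smul]; exact h0K
          · exact K.smul_mem h hx
        isClosed' := isClosed_closure }
    intro v hv
    have hCC := ProperCone.innerDual_innerDual C
    have hv2 : v ∈ C := by rw [← hCC]; exact hv
    exact hv2
  -- dual of closure F = dual of F
  have hdualF : ((ProperCone.innerDual (K : Set (EuclideanSpace ℝ (Fin n))) :
      ProperCone ℝ (EuclideanSpace ℝ (Fin n))) : Set (EuclideanSpace ℝ (Fin n)))
      = (ProperCone.innerDual F : Set (EuclideanSpace ℝ (Fin n))) := by
    ext y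
    simp only [SetLike.mem_coe, ProperCone.mem_innerDual]
    constructor
    · exact fun h x hx => h (subset_closure hx)
    · intro h x hx
      have hcl : IsClosed {z : EuclideanSpace ℝ (Fin n) | 0 ≤ (inner ℝ z y : ℝ)} :=
        isClosed_le continuous_const (Continuous.inner continuous_id continuous_const)
      exact closure_minimal h hcl hx
  -- D = {w | ∀ ξ ∈ F, 0 < ⟪w, ξ⟫}
  set D : Set (EuclideanSpace ℝ (Fin n)) := {w | ∀ ξ ∈ F, (0:ℝ) < inner ℝ w ξ} with hD
  have hw₀D : w₀ ∈ D := hw₀pos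
  -- dual of D ⊆ closure F
  have hDdual : ∀ v : EuclideanSpace ℝ (Fin n),
      (∀ w ∈ D, (0:ℝ) ≤ inner ℝ w v) → v ∈ closure F := by
    intro v hv
    have hv' : v ∈ ProperCone.innerDual (ProperCone.innerDual (K : Set (EuclideanSpace ℝ (Fin n))) :
        Set (EuclideanSpace ℝ (Fin n))) := by
      rw [ProperCone.mem_innerDual]
      intro w hw
      rw [hdualF] at hw
      rw [SetLike.mem_coe, ProperCone.mem_innerDual] at hw
      -- w + t • w₀ ∈ D for t > 0
      have key : ∀ t : ℝ, 0 < t → (0:ℝ) ≤ inner ℝ w v + t * inner ℝ w₀ v := by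
        intro t ht
        have hmem : w + t • w₀ ∈ D := by
          intro ξ hξ
          have h1 : (0:ℝ) ≤ inner ℝ w ξ := by rw [real_inner_comm]; exact hw hξ
          have h2 := hw₀pos ξ hξ
          rw [inner_add_left, real_inner_smul_left]
          nlinarith
        have := hv _ hmem
        rwa [inner_add_left, real_inner_smul_left] at this
      have htend : Filter.Tendsto (fun t : ℝ => (inner ℝ w v : ℝ) + t * inner ℝ w₀ v)
          (nhdsWithin 0 (Set.Ioi 0)) (nhds ((inner ℝ w v : ℝ))) := by
        have h4 : Filter.Tendsto (fun t : ℝ => (inner ℝ w v : ℝ) + t * inner ℝ w₀ v)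
            (nhds 0) (nhds ((inner ℝ w v : ℝ) + 0 * inner ℝ w₀ v)) :=
          (continuous_const.add (continuous_id.mul continuous_const)).tendsto 0
        simpa using h4.mono_left nhdsWithin_le_nhds
      exact ge_of_tendsto htend (Filter.eventually_of_mem self_mem_nhdsWithin
        (fun t ht => key t ht))
    exact hdd v hv'
  ext v
  simp only [Set.mem_setOf_eq, hRHS]
  constructor
  · intro hv
    -- first: v.1 + v.2 = 0
    have hgen : ∀ z : EuclideanSpace ℝ (Fin n),
        (0:ℝ) ≤ inner ℝ (z + w₀) v.1 + inner ℝ z v.2 := by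
      intro z
      refine hv (z + w₀, z) ?_
      intro ξ hξ
      simpa using hw₀pos ξ hξ
    set u : EuclideanSpace ℝ (Fin n) := v.1 + v.2 with hu
    have hlow : ∀ z : EuclideanSpace ℝ (Fin n),
        (0:ℝ) ≤ inner ℝ z u + inner ℝ w₀ v.1 := by
      intro z
      have h5 := hgen z
      rw [inner_add_left] at h5
      rw [hu, inner_add_right]
      linarith
    have hu0 : u = 0 := by
      by_contra hne'
      have hn : (0:ℝ) < ‖u‖^2 := pow_pos (norm_pos_iff.mpr hne') 2
      set c : ℝ := inner ℝ w₀ v.1 with hc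
      have h1 : ∀ t : ℝ, 0 < t → t * ‖u‖^2 ≤ c := by
        intro t ht
        have h6 := hlow (-(t • u))
        rw [inner_neg_left, real_inner_smul_left, real_inner_self_eq_norm_sq] at h6
        linarith
      have hc0 : 0 ≤ c := by have := h1 1 one_pos; nlinarith
      have h7 := h1 ((c + 1)/‖u‖^2) (div_pos (by linarith) hn)
      rw [div_mul_cancel₀] at h7
      · linarith
      · positivity
    have hv2 : v.2 = -v.1 := by
      have h8 : v.1 + v.2 = 0 := hu0
      linear_combination (norm := module) h8
    -- v.1 ∈ dual of D
    have hv1 : v.1 ∈ closure F := by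
      refine hDdual v.1 ?_
      intro w hwD
      have h9 := hv (w, 0) (by intro ξ hξ; simpa using hwD ξ hξ)
      simpa [real_inner_comm w v.1] using h9
    refine ⟨v.1, hv1, ?_⟩
    show (v.1, -v.1) = v
    rw [← hv2]
  · rintro ⟨ξ, hξ, rfl⟩
    intro p hp
    show (0:ℝ) ≤ inner ℝ p.1 ξ + inner ℝ p.2 (-ξ)
    have hcl : IsClosed {z : EuclideanSpace ℝ (Fin n) | 0 ≤ (inner ℝ (p.1 - p.2) z : ℝ)} :=
      isClosed_le continuous_const (Continuous.inner continuous_const continuous_id)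
    have h10 : (0:ℝ) ≤ inner ℝ (p.1 - p.2) ξ :=
      closure_minimal (fun z hz => le_of_lt (hp z hz)) hcl hξ
    rw [inner_sub_left] at h10
    rw [inner_neg_right]
    linarith
end

section
/- Let 𝒩 be a Fréchet space, (p_k)_{k≥0} continuous seminorms on 𝒩, and (M^{(λ)})_{λ∈ℕ} a countable family of positive sequences. Suppose that for every u ∈ 𝒩 there exist r ∈ ℕ and λ ∈ ℕ with p_k(u) ≤ r^k M_k^{(λ)} for all k ≥ 0. Then there exist r₀ ∈ ℕ, λ₀ ∈ ℕ, and a continuous seminorm q on 𝒩 such that p_k(u) ≤ r₀^k M_k^{(λ₀)} q(u) for all u ∈ 𝒩 and all k ≥ 0. -/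
open Set Filter Pointwise

/-- Baire-category lemma in a Fréchet space: if each `u` satisfies
`p k u ≤ r^k M^{(λ)}_k` for some `r, λ`, then a single `r₀, λ₀` works uniformly,
up to a continuous seminorm factor. -/
theorem stmt15 (N : Type*) [AddCommGroup N] [Module ℝ N] [UniformSpace N]
    [IsUniformAddGroup N] [ContinuousSMul ℝ N] [LocallyConvexSpace ℝ N]
    [CompleteSpace N] [TopologicalSpace.MetrizableSpace N]
    (M : ℕ → ℕ → ℝ) (hMpos : ∀ lam k : ℕ, 0 < M lam k)
    (p : ℕ → Seminorm ℝ N) (hp : ∀ k : ℕ, Continuous fun u : N => p k u)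
    (h : ∀ u : N, ∃ r : ℕ, ∃ lam : ℕ, ∀ k : ℕ, p k u ≤ (r : ℝ) ^ k * M lam k) :
    ∃ r0 : ℕ, ∃ lam0 : ℕ, ∃ q : Seminorm ℝ N, (Continuous fun u : N => q u) ∧
      ∀ u : N, ∀ k : ℕ, p k u ≤ (r0 : ℝ) ^ k * M lam0 k * q u := by
  classical
  -- The uniformity is countably generated
  haveI : (uniformity N).IsCountablyGenerated := by
    rw [uniformity_eq_comap_nhds_zero N]
    infer_instance
  haveI : BaireSpace N := BaireSpace.of_completelyPseudoMetrizable
  -- The closed sets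
  set F : ℕ × ℕ → Set N := fun rl => ⋂ k : ℕ, {u : N | p k u ≤ (rl.1 : ℝ) ^ k * M rl.2 k}
    with hF
  have hclosed : ∀ rl, IsClosed (F rl) :=
    fun rl => isClosed_iInter fun k => isClosed_le (hp k) continuous_const
  have hcover : ⋃ rl, F rl = univ := by
    ext u
    simp only [mem_iUnion, mem_iInter, mem_setOf_eq, mem_univ, iff_true, hF]
    obtain ⟨r, lam, hrl⟩ := h u
    exact ⟨(r, lam), hrl⟩
  obtain ⟨⟨r0, lam0⟩, x, hx⟩ := nonempty_interior_of_iUnion_of_closed hclosed hcover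
  set s : Set N := F (r0, lam0) with hs
  have hmem : ∀ {u : N}, u ∈ s → ∀ k, p k u ≤ (r0 : ℝ) ^ k * M lam0 k := by
    intro u hu k
    exact mem_iInter.1 hu k
  have hmem' : ∀ {u : N}, (∀ k, p k u ≤ (r0 : ℝ) ^ k * M lam0 k) → u ∈ s := by
    intro u hu
    exact mem_iInter.2 hu
  -- s is balanced
  have hbal : Balanced ℝ s := by
    intro a ha u hu
    obtain ⟨v, hv, rfl⟩ := hu
    refine hmem' fun k => ?_
    have := hmem hv k
    calc p k (a • v) = ‖a‖ * p k v := map_smul_eq_mul _ _ _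
      _ ≤ 1 * p k v := by
          exact mul_le_mul_of_nonneg_right ha (apply_nonneg _ _)
      _ = p k v := one_mul _
      _ ≤ _ := this
  -- s is convex
  have hconv : Convex ℝ s := by
    refine convex_iInter fun k => ?_
    intro u hu v hv a b ha hb hab
    simp only [mem_setOf_eq] at hu hv ⊢
    calc p k (a • u + b • v) ≤ p k (a • u) + p k (b • v) := map_add_le_add _ _ _
      _ = a * p k u + b * p k v := by
          rw [map_smul_eq_mul, map_smul_eq_mul, Real.norm_of_nonneg ha,
            Real.norm_of_nonneg hb]
      _ ≤ a * ((r0 : ℝ) ^ k * M lam0 k) + b * ((r0 : ℝ) ^ k * M lam0 k) := by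
          gcongr
      _ = (a + b) * ((r0 : ℝ) ^ k * M lam0 k) := by ring
      _ = (r0 : ℝ) ^ k * M lam0 k := by rw [hab, one_mul]
  -- s is symmetric
  have hsymm : ∀ u ∈ s, -u ∈ s := by
    intro u hu
    refine hmem' fun k => ?_
    rw [map_neg_eq_map]
    exact hmem hu k
  -- 0 belongs to the interior of s
  have h0 : (0 : N) ∈ interior s := by
    have hsneg : -s = s := by
      ext u
      simp only [Set.mem_neg]
      exact ⟨fun hu => by simpa using hsymm _ hu, fun hu => hsymm u hu⟩
    have hx' : -x ∈ interior s := by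
      have h1 : -x ∈ (Homeomorph.neg N) '' interior s := ⟨x, hx, rfl⟩
      rw [(Homeomorph.neg N).image_interior] at h1
      simpa [Set.image_neg, hsneg] using h1
    have := (hconv.interior) hx hx' (le_of_lt one_half_pos) (le_of_lt one_half_pos)
      (by norm_num)
    simpa using this
  have hs0 : s ∈ nhds (0 : N) := mem_of_superset (isOpen_interior.mem_nhds h0) interior_subset
  have habs : Absorbent ℝ s := absorbent_nhds_zero hs0
  refine ⟨r0, lam0, gaugeSeminorm hbal hconv habs, ?_, ?_⟩
  · simpa using continuous_gauge hconv hs0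
  · intro u k
    set C : ℝ := (r0 : ℝ) ^ k * M lam0 k with hC
    have hC0 : 0 ≤ C := by
      rw [hC]
      exact mul_nonneg (pow_nonneg (Nat.cast_nonneg r0) k) (hMpos lam0 k).le
    have key : ∀ t : ℝ, 0 < t → u ∈ t • s → p k u ≤ C * t := by
      intro t ht hu
      obtain ⟨v, hv, rfl⟩ := hu
      calc p k (t • v) = ‖t‖ * p k v := map_smul_eq_mul _ _ _
        _ = t * p k v := by rw [Real.norm_of_nonneg ht.le]
        _ ≤ t * C := mul_le_mul_of_nonneg_left (hmem hv k) ht.le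
        _ = C * t := mul_comm _ _
    have : p k u ≤ C * gauge s u := by
      refine le_of_forall_pos_le_add fun ε hε => ?_
      have hδ : 0 < ε / (C + 1) := div_pos hε (by linarith)
      obtain ⟨b, hb0, hbl, hbmem⟩ :=
        exists_lt_of_gauge_lt habs (lt_add_of_pos_right (gauge s u) hδ)
      calc p k u ≤ C * b := key b hb0 hbmem
        _ ≤ C * (gauge s u + ε / (C + 1)) :=
            mul_le_mul_of_nonneg_left hbl.le hC0
        _ = C * gauge s u + C * (ε / (C + 1)) := by ring
        _ ≤ C * gauge s u + ε := by
            have : C * (ε / (C + 1)) ≤ ε := by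
              rw [mul_div_assoc']
              rw [div_le_iff₀ (by linarith : (0:ℝ) < C + 1)]
              nlinarith
            linarith
    simpa using this
end
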